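/- Let p(x,y) = M(x)y² + a(x)y + b(x) and q(x,y) = N(x)y² + c(x)y + d(x) be polynomials in ℝ[x,y]. Let R₀(x) and R₁(x) be the 0- and 1-subresultants in y of p and q (as polynomials in y of formal degree 2), and let b_l be the leading coefficient of R₀(x). (Part 1) If (i) R₀(x) has no common real zeros with M(x) and none with N(x), and (ii) b_l > 0 and there exists z ∈ ℝ with R₁(z) = 0 and M(z)·N(z) ≠ 0, then there exists (α,β) ∈ ℝ² with p(α,β) = q(α,β) = 0. (Part 2) If instead of (i) one assumes (i′) R₀(x) has no common real zeros with N(x) and there exists α ∈ ℝ with R₀(α) = M(α) = 0, while keeping (ii), then there exists β ∈ ℝ with p(α,β) = q(α,β) = 0 if and only if a(α) ≠ 0, or p(α,y) is identically zero as a polynomial in y and c(α)² − 4N(α)d(α) ≥ 0. -/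

import Mathlib

open Polynomial Filter Set Topology


/-- The Sylvester matrix of two polynomials of formal degrees `n` and `m`,
given by their coefficient functions `P` and `Q` (`P i` is the coefficient of
`yⁱ`).  Its first `m` rows contain the coefficient vector `(P n, …, P 0)`
successively shifted to the right, and its last `n` rows contain the
coefficient vector `(Q m, …, Q 0)` in reversed shift order. -/
def sylvesterMat {R : Type*} [CommRing R] (n m : ℕ) (P Q : ℕ → R) :
    Matrix (Fin (n + m)) (Fin (n + m)) R :=
  Matrix.of fun i s =>
    if (i : ℕ) < m then
      (if (i : ℕ) ≤ (s : ℕ) ∧ (s : ℕ) ≤ (i : ℕ) + n then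
        P (n - ((s : ℕ) - (i : ℕ))) else 0)
    else
      (if n - 1 - ((i : ℕ) - m) ≤ (s : ℕ) ∧ (s : ℕ) ≤ n - 1 - ((i : ℕ) - m) + m then
        Q (m + n - 1 - ((i : ℕ) - m) - (s : ℕ)) else 0)

/-- The `k`-subresultant: the determinant of the matrix obtained from the
Sylvester matrix by deleting its first `k` and last `k` rows and columns. -/
def subresultant {R : Type*} [CommRing R] (n m : ℕ) (P Q : ℕ → R) (k : ℕ) : R :=
  Matrix.det (Matrix.of fun r c : Fin (n + m - 2 * k) =>
    sylvesterMat n m P Q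
      ⟨k + (r : ℕ), by have := r.isLt; omega⟩
      ⟨k + (c : ℕ), by have := c.isLt; omega⟩)

/-- Let `p(x,y) = M(x)y² + a(x)y + b(x)` and
`q(x,y) = N(x)y² + c(x)y + d(x)`, with `R₀(x)`, `R₁(x)` their `0`- and `1`-
subresultants in `y` (formal degree `2`) and `b_l` the leading coefficient of
`R₀`.
Part 1: if `R₀` has no common real zero with `M` nor with `N`, `b_l > 0`, and
there is `z` with `R₁(z) = 0` and `M(z)·N(z) ≠ 0`, then `p` and `q` have a
common real zero.
Part 2: if instead `R₀` has no common real zero with `N` and there is `α` with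
`R₀(α) = M(α) = 0` (keeping the other hypotheses), then there is `β` with
`p(α,β) = q(α,β) = 0` iff `a(α) ≠ 0`, or `p(α,·) ≡ 0` and
`c(α)² − 4N(α)d(α) ≥ 0`. -/
lemma sub1 {R : Type*} [CommRing R] (P Q : ℕ → R) :
    subresultant 2 2 P Q 1 = P 2 * Q 1 - P 1 * Q 2 := by
  show Matrix.det (_ : Matrix (Fin 2) (Fin 2) R) = _
  rw [Matrix.det_fin_two]
  simp [sylvesterMat]

set_option maxHeartbeats 1000000 in
set_option maxRecDepth 40000 in
lemma sub0 {R : Type*} [CommRing R] (P Q : ℕ → R) :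
    subresultant 2 2 P Q 0 =
      -(P 2 * Q 0 - Q 2 * P 0)^2 + (P 2 * Q 1 - P 1 * Q 2) * (P 1 * Q 0 - P 0 * Q 1) := by
  show Matrix.det (_ : Matrix (Fin 4) (Fin 4) R) = _
  simp [Matrix.det_succ_row_zero, Fin.sum_univ_succ, sylvesterMat, Fin.succAbove]
  norm_num [Fin.le_def]
  ring

lemma quad_root (m u v : ℝ) (hm : m ≠ 0) (h : u^2 - 4*m*v ≥ 0) :
    ∃ β : ℝ, m*β^2 + u*β + v = 0 := by
  refine ⟨(-u + Real.sqrt (u^2 - 4*m*v))/(2*m), ?_⟩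
  have hs : Real.sqrt (u^2-4*m*v)^2 = u^2-4*m*v := Real.sq_sqrt h
  field_simp
  linear_combination (norm := ring_nf) hs

lemma aux_rootA (m a b n c d : ℝ)
    (h0 : -(m*d-n*b)^2 + (m*c-a*n)*(a*d-b*c) = 0) (hA : m*c-a*n ≠ 0) :
    ∃ β : ℝ, m*β^2+a*β+b = 0 ∧ n*β^2+c*β+d = 0 := by
  refine ⟨-(m*d-n*b)/(m*c-a*n), ?_, ?_⟩
  · have e : m*(-(m*d-n*b)/(m*c-a*n))^2 + a*(-(m*d-n*b)/(m*c-a*n)) + b =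
        (m*(m*d-n*b)^2 - a*(m*d-n*b)*(m*c-a*n) + b*(m*c-a*n)^2)/(m*c-a*n)^2 := by
      rw [mul_comm a n] at hA ⊢
      field_simp
      ring
    rw [e, _root_.div_eq_zero_iff]
    left
    linear_combination (-m) * h0
  · have e : n*(-(m*d-n*b)/(m*c-a*n))^2 + c*(-(m*d-n*b)/(m*c-a*n)) + d =
        (n*(m*d-n*b)^2 - c*(m*d-n*b)*(m*c-a*n) + d*(m*c-a*n)^2)/(m*c-a*n)^2 := by
      rw [mul_comm a n] at hA ⊢
      field_simp
      ring
    rw [e, _root_.div_eq_zero_iff]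
    left
    linear_combination (-n) * h0

lemma aux_sign (m a b n c d : ℝ) (h' : 4*m*b - a^2 > 0) :
    -(m*d-n*b)^2 + (m*c-a*n)*(a*d-b*c) ≤ 0 := by
  have hm : m ≠ 0 := by
    intro h
    rw [h] at h'
    nlinarith [sq_nonneg a]
  have hm2 : 0 < m^2 := lt_of_le_of_ne (sq_nonneg m) (Ne.symm (pow_ne_zero 2 hm))
  have key : 4*m^2*(-(m*d-n*b)^2 + (m*c-a*n)*(a*d-b*c))
      = -(2*m*(m*d-n*b) - a*(m*c-a*n))^2 - (4*m*b-a^2)*(m*c-a*n)^2 := by ring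
  nlinarith [sq_nonneg (2*m*(m*d-n*b) - a*(m*c-a*n)), sq_nonneg (m*c-a*n),
    mul_nonneg h'.le (sq_nonneg (m*c-a*n))]

lemma exists_zero_right (f : Polynomial ℝ) (z : ℝ) (hz : f.eval z ≤ 0)
    (hl : 0 < f.leadingCoeff) :
    ∃ x₀ : ℝ, f.eval x₀ = 0 ∧ ∀ᶠ x in 𝓝[>] x₀, 0 < f.eval x := by
  have hdeg : 0 < f.degree := by
    rcases le_or_gt f.degree 0 with hd | hd
    · have hf := Polynomial.eq_C_of_degree_le_zero hd
      rw [hf] at hz hl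
      simp [Polynomial.leadingCoeff] at hz hl
      linarith
    · exact hd
  have hcont : Continuous fun x : ℝ => f.eval x := f.continuous
  have htop := f.tendsto_atTop_of_leadingCoeff_nonneg hdeg hl.le
  obtain ⟨w, hw1, hw2⟩ := ((htop.eventually_gt_atTop 0).and (eventually_gt_atTop z)).exists
  set S := Icc z w ∩ {x : ℝ | f.eval x ≤ 0} with hSdef
  have hSc : IsClosed S := isClosed_Icc.inter (isClosed_le hcont continuous_const)
  have hSne : S.Nonempty := ⟨z, ⟨le_refl z, hw2.le⟩, hz⟩
  have hSbd : BddAbove S := ⟨w, fun x hx => hx.1.2⟩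
  set x₀ := sSup S with hx₀def
  have hx₀S : x₀ ∈ S := hSc.csSup_mem hSne hSbd
  have hx₀le : f.eval x₀ ≤ 0 := hx₀S.2
  have hx₀w : x₀ < w := lt_of_le_of_ne hx₀S.1.2 (fun h => by rw [h] at hx₀le; linarith)
  have hpos' : ∀ᶠ x in 𝓝[>] x₀, 0 < f.eval x := by
    filter_upwards [Ioc_mem_nhdsGT_of_mem ⟨le_refl x₀, hx₀w⟩] with x hx
    by_contra hcc
    push_neg at hcc
    have hxS : x ∈ S := ⟨⟨hx₀S.1.1.trans hx.1.le, hx.2⟩, hcc⟩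
    exact absurd (le_csSup hSbd hxS) (not_le.mpr hx.1)
  refine ⟨x₀, le_antisymm hx₀le ?_, hpos'⟩
  have ht : Tendsto (fun x => f.eval x) (𝓝[>] x₀) (𝓝 (f.eval x₀)) :=
    (hcont.tendsto x₀).mono_left nhdsWithin_le_nhds
  exact ge_of_tendsto ht (hpos'.mono fun x hx => hx.le)

theorem common_zero_deg2_deg2_subres1
    (M a b N c d : Polynomial ℝ)
    (R₀ R₁ : Polynomial ℝ)
    (hR₀ : R₀ = subresultant 2 2
      (fun i => if i = 0 then b else if i = 1 then a else if i = 2 then M else 0)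
      (fun i => if i = 0 then d else if i = 1 then c else if i = 2 then N else 0) 0)
    (hR₁ : R₁ = subresultant 2 2
      (fun i => if i = 0 then b else if i = 1 then a else if i = 2 then M else 0)
      (fun i => if i = 0 then d else if i = 1 then c else if i = 2 then N else 0) 1)
    (hpos : R₀.leadingCoeff > 0)
    (hz : ∃ z : ℝ, R₁.eval z = 0 ∧ M.eval z * N.eval z ≠ 0) :
    (((∀ x : ℝ, ¬(R₀.eval x = 0 ∧ M.eval x = 0)) ∧
      (∀ x : ℝ, ¬(R₀.eval x = 0 ∧ N.eval x = 0))) →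
      ∃ α β : ℝ,
        M.eval α * β ^ 2 + a.eval α * β + b.eval α = 0 ∧
        N.eval α * β ^ 2 + c.eval α * β + d.eval α = 0) ∧
    (∀ α : ℝ,
      ((∀ x : ℝ, ¬(R₀.eval x = 0 ∧ N.eval x = 0)) ∧
        R₀.eval α = 0 ∧ M.eval α = 0) →
      ((∃ β : ℝ,
          M.eval α * β ^ 2 + a.eval α * β + b.eval α = 0 ∧
          N.eval α * β ^ 2 + c.eval α * β + d.eval α = 0) ↔
        (a.eval α ≠ 0 ∨
          ((M.eval α = 0 ∧ a.eval α = 0 ∧ b.eval α = 0) ∧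
            (c.eval α) ^ 2 - 4 * N.eval α * d.eval α ≥ 0)))) := by
  have hR₀' : R₀ = -(M*d - N*b)^2 + (M*c - a*N)*(a*d - b*c) := by
    rw [hR₀, sub0]; norm_num
  have hR₁' : R₁ = M*c - a*N := by
    rw [hR₁, sub1]; norm_num
  have e0 : ∀ x : ℝ, R₀.eval x =
      -(M.eval x*d.eval x - N.eval x*b.eval x)^2 +
        (M.eval x*c.eval x - a.eval x*N.eval x)*(a.eval x*d.eval x - b.eval x*c.eval x) := by
    intro x; rw [hR₀']; simp
  have e1 : ∀ x : ℝ, R₁.eval x = M.eval x*c.eval x - a.eval x*N.eval x := by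
    intro x; rw [hR₁']; simp
  constructor
  · rintro ⟨hMh, _⟩
    obtain ⟨z, hz1, _⟩ := hz
    have hAz : M.eval z*c.eval z - a.eval z*N.eval z = 0 := by
      rw [e1 z] at hz1; exact hz1
    have hz0 : R₀.eval z ≤ 0 := by
      rw [e0 z, hAz]
      nlinarith [sq_nonneg (M.eval z*d.eval z - N.eval z*b.eval z)]
    obtain ⟨x₀, hx0, hev⟩ := exists_zero_right R₀ z hz0 hpos
    have hM0 : M.eval x₀ ≠ 0 := fun h => hMh x₀ ⟨hx0, h⟩
    have hdisc : a.eval x₀^2 - 4*M.eval x₀*b.eval x₀ ≥ 0 := by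
      by_contra hd
      push_neg at hd
      have hg : (0:ℝ) < 4*M.eval x₀*b.eval x₀ - a.eval x₀^2 := by linarith
      have hcg : Continuous fun x : ℝ => 4*M.eval x*b.eval x - a.eval x^2 :=
        ((continuous_const.mul M.continuous).mul b.continuous).sub (a.continuous.pow 2)
      have hmem := (isOpen_lt continuous_const hcg).mem_nhds
        (show x₀ ∈ {x : ℝ | 0 < 4*M.eval x*b.eval x - a.eval x^2} from hg)
      have hev2 : ∀ᶠ x in 𝓝[>] x₀, 0 < 4*M.eval x*b.eval x - a.eval x^2 :=
        (Filter.eventually_iff.mpr hmem).filter_mono nhdsWithin_le_nhds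
      obtain ⟨x, hx1, hx2⟩ := (hev.and hev2).exists
      have := aux_sign (M.eval x) (a.eval x) (b.eval x) (N.eval x) (c.eval x) (d.eval x) hx2
      rw [e0 x] at hx1
      linarith
    have h00 : -(M.eval x₀*d.eval x₀ - N.eval x₀*b.eval x₀)^2 +
        (M.eval x₀*c.eval x₀ - a.eval x₀*N.eval x₀)*(a.eval x₀*d.eval x₀ - b.eval x₀*c.eval x₀)
         = 0 := by rw [← e0 x₀]; exact hx0
    by_cases hA : M.eval x₀*c.eval x₀ - a.eval x₀*N.eval x₀ = 0
    · have hB2 : (M.eval x₀*d.eval x₀ - N.eval x₀*b.eval x₀)^2 = 0 := by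
        rw [hA] at h00; linarith
      have hB : M.eval x₀*d.eval x₀ - N.eval x₀*b.eval x₀ = 0 :=
        pow_eq_zero_iff (by norm_num) |>.mp hB2
      obtain ⟨β, hb⟩ := quad_root (M.eval x₀) (a.eval x₀) (b.eval x₀) hM0 hdisc
      refine ⟨x₀, β, hb, ?_⟩
      have key : M.eval x₀ * (N.eval x₀*β^2 + c.eval x₀*β + d.eval x₀) = 0 := by
        linear_combination N.eval x₀ * hb + β * hA + hB
      exact (mul_eq_zero.mp key).resolve_left hM0
    · obtain ⟨β, h1, h2⟩ := aux_rootA (M.eval x₀) (a.eval x₀) (b.eval x₀)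
        (N.eval x₀) (c.eval x₀) (d.eval x₀) h00 hA
      exact ⟨x₀, β, h1, h2⟩
  · rintro α ⟨hNh, hr0, hM0⟩
    have hN0 : N.eval α ≠ 0 := fun h => hNh α ⟨hr0, h⟩
    have h := hr0
    rw [e0 α] at h
    have key : N.eval α*(b.eval α)^2 + (a.eval α)^2*(d.eval α)
        - a.eval α*b.eval α*c.eval α = 0 := by
      have h2 : N.eval α * (N.eval α*(b.eval α)^2 + (a.eval α)^2*(d.eval α)
          - a.eval α*b.eval α*c.eval α) = 0 := by
        rw [hM0] at h
        linear_combination -h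
      exact (mul_eq_zero.mp h2).resolve_left hN0
    constructor
    · rintro ⟨β, hp, hq⟩
      by_cases ha : a.eval α = 0
      · have hb0 : b.eval α = 0 := by
          have h3 : N.eval α * (b.eval α * b.eval α) = 0 := by
            rw [ha] at key; linear_combination key
          have := (mul_eq_zero.mp h3).resolve_left hN0
          exact (mul_self_eq_zero).mp this
        refine Or.inr ⟨⟨hM0, ha, hb0⟩, ?_⟩
        have h3 : (c.eval α)^2 - 4*N.eval α*d.eval α = (2*N.eval α*β + c.eval α)^2 := by
          linear_combination -4*N.eval α*hq
        rw [h3]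
        positivity
      · exact Or.inl ha
    · rintro (ha | ⟨⟨_, ha, hb⟩, hdisc⟩)
      · refine ⟨-(b.eval α)/(a.eval α), ?_, ?_⟩
        · rw [hM0]; field_simp; ring
        · have e : N.eval α*(-(b.eval α)/(a.eval α))^2 + c.eval α*(-(b.eval α)/(a.eval α)) + d.eval α
              = (N.eval α*(b.eval α)^2 - c.eval α*(b.eval α)*(a.eval α) + d.eval α*(a.eval α)^2)
                / (a.eval α)^2 := by
            field_simp
            ring
          rw [e, _root_.div_eq_zero_iff]
          left
          linear_combination key
      · obtain ⟨β, hb2⟩ := quad_root (N.eval α) (c.eval α) (d.eval α) hN0 hdisc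
        exact ⟨β, by rw [hM0, ha, hb]; ring, hb2⟩
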